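/- Blichfeldt's sphere packing bound: for any packing of R^n by unit balls, the upper density is at most (n+2)/2^{(n+2)/2}. -/

import Mathlib

open MeasureTheory Filter Finset Metric Set

lemma blich_finset {E : Type*} [NormedAddCommGroup E] [InnerProductSpace ℝ E]
    {ι : Type*} (F : Finset ι) (v : ι → E)
    (h : ∀ i ∈ F, ∀ j ∈ F, i ≠ j → 2 ≤ ‖v i - v j‖) :
    ∑ i ∈ F, max 0 (1 - ‖v i‖ ^ 2 / 2) ≤ 1 := by
  classical
  set F' := F.filter (fun i => ‖v i‖ ^ 2 < 2) with hF'
  have hsub : F' ⊆ F := Finset.filter_subset _ _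
  have hstep : ∑ i ∈ F, max 0 (1 - ‖v i‖ ^ 2 / 2) = ∑ i ∈ F', (1 - ‖v i‖ ^ 2 / 2) := by
    rw [hF', Finset.sum_filter]
    refine Finset.sum_congr rfl fun i _ => ?_
    by_cases hi : ‖v i‖ ^ 2 < 2
    · rw [if_pos hi, max_eq_right (by linarith)]
    · rw [if_neg hi, max_eq_left (by push_neg at hi; linarith)]
  rw [hstep]
  rcases F'.eq_empty_or_nonempty with he | hne
  · simp [he]
  set k : ℝ := (F'.card : ℝ) with hk
  have hkpos : 0 < k := by
    simp only [hk, Nat.cast_pos, Finset.card_pos]; exact hne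
  have expand : ∑ i ∈ F', ∑ j ∈ F', ‖v i - v j‖ ^ 2
      = 2 * k * (∑ i ∈ F', ‖v i‖ ^ 2) - 2 * ‖∑ i ∈ F', v i‖ ^ 2 := by
    have : ∀ i ∈ F', ∀ j ∈ F',
        ‖v i - v j‖ ^ 2 = ‖v i‖ ^ 2 - 2 * inner ℝ (v i) (v j) + ‖v j‖ ^ 2 := by
      intro i _ j _; exact norm_sub_sq_real (v i) (v j)
    rw [Finset.sum_congr rfl fun i hi => Finset.sum_congr rfl fun j hj => this i hi j hj]
    have hinner : ∑ i ∈ F', ∑ j ∈ F', (inner ℝ (v i) (v j) : ℝ)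
        = ‖∑ i ∈ F', v i‖ ^ 2 := by
      rw [← real_inner_self_eq_norm_sq]
      rw [sum_inner]
      exact Finset.sum_congr rfl fun i _ => (inner_sum F' v (v i)).symm
    simp only [Finset.sum_add_distrib, Finset.sum_sub_distrib, ← Finset.mul_sum,
      Finset.sum_const, nsmul_eq_mul]
    rw [hinner, hk]
    ring
  have lower : 4 * k * (k - 1) ≤ ∑ i ∈ F', ∑ j ∈ F', ‖v i - v j‖ ^ 2 := by
    have each : ∀ i ∈ F', (4 * (k - 1) : ℝ) ≤ ∑ j ∈ F', ‖v i - v j‖ ^ 2 := by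
      intro i hi
      have : ∑ j ∈ F', (if j = i then (0:ℝ) else 4) ≤ ∑ j ∈ F', ‖v i - v j‖ ^ 2 := by
        refine Finset.sum_le_sum fun j hj => ?_
        by_cases hji : j = i
        · simp [hji]
        · rw [if_neg hji]
          have h2 := h i (hsub hi) j (hsub hj) (Ne.symm hji)
          nlinarith [norm_nonneg (v i - v j)]
      calc (4 * (k - 1) : ℝ) = ∑ j ∈ F', (if j = i then (0:ℝ) else 4) := by
            have e1 : ∑ j ∈ F', (if j = i then (0:ℝ) else 4)
                = ∑ j ∈ F', (4:ℝ) - ∑ j ∈ F', (if j = i then (4:ℝ) else 0) := by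
              rw [← Finset.sum_sub_distrib]
              refine Finset.sum_congr rfl fun j _ => ?_
              by_cases hji : j = i <;> simp [hji]
            rw [e1, Finset.sum_ite_eq' F' i (fun _ => (4:ℝ)), if_pos hi,
              Finset.sum_const, nsmul_eq_mul, ← hk]
            ring
        _ ≤ _ := this
    calc (4 * k * (k - 1) : ℝ) = ∑ _i ∈ F', (4 * (k - 1) : ℝ) := by
          rw [Finset.sum_const, nsmul_eq_mul, hk]; ring
      _ ≤ _ := Finset.sum_le_sum each
  have hsum2 : 2 * (k - 1) ≤ ∑ i ∈ F', ‖v i‖ ^ 2 := by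
    nlinarith [norm_nonneg (∑ i ∈ F', v i), sq_nonneg ‖∑ i ∈ F', v i‖]
  have : ∑ i ∈ F', (1 - ‖v i‖ ^ 2 / 2) = k - (∑ i ∈ F', ‖v i‖ ^ 2) / 2 := by
    rw [Finset.sum_sub_distrib, Finset.sum_const, nsmul_eq_mul, ← hk, Finset.sum_div]
    ring
  rw [this]; linarith

lemma blich_tsum {E : Type*} [NormedAddCommGroup E] [InnerProductSpace ℝ E]
    (c : ℕ → E) (hsep : Pairwise fun i j => 2 ≤ dist (c i) (c j)) (x : E) :
    ∑' i, ENNReal.ofReal (1 - ‖x - c i‖ ^ 2 / 2) ≤ 1 := by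
  rw [ENNReal.tsum_eq_iSup_sum]
  refine iSup_le fun F => ?_
  have e1 : ∀ i, ENNReal.ofReal (1 - ‖x - c i‖ ^ 2 / 2)
      = ENNReal.ofReal (max 0 (1 - ‖x - c i‖ ^ 2 / 2)) := by
    intro i
    rcases le_total (1 - ‖x - c i‖ ^ 2 / 2) 0 with h0 | h0
    · rw [ENNReal.ofReal_of_nonpos h0, max_eq_left h0, ENNReal.ofReal_zero]
    · rw [max_eq_right h0]
  calc ∑ i ∈ F, ENNReal.ofReal (1 - ‖x - c i‖ ^ 2 / 2)
      = ENNReal.ofReal (∑ i ∈ F, max 0 (1 - ‖x - c i‖ ^ 2 / 2)) := by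
        rw [ENNReal.ofReal_sum_of_nonneg fun i _ => le_max_left _ _]
        exact Finset.sum_congr rfl fun i _ => e1 i
    _ ≤ 1 := by
        rw [← ENNReal.ofReal_one]
        apply ENNReal.ofReal_le_ofReal
        refine blich_finset F (fun i => x - c i) fun i hi j hj hij => ?_
        have := hsep hij
        rwa [sub_sub_sub_cancel_left, ← dist_eq_norm, dist_comm]

lemma cont_aux (p : ℝ) (hp : 0 < p) : Continuous fun t : ℝ => (2 - 2*t) ^ p :=
  Continuous.rpow_const (by fun_prop) fun _ => Or.inr hp.le

lemma real_J (n : ℕ) (hn : 1 ≤ n) :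
    ∫ t in Set.Ioo (0:ℝ) 1, (2 - 2*t) ^ ((n:ℝ)/2)
      = 2 ^ (((n:ℝ)+2)/2) / ((n:ℝ)+2) := by
  have hp : (0:ℝ) < (n:ℝ)/2 := by positivity
  rw [← integral_Ioc_eq_integral_Ioo, ← intervalIntegral.integral_of_le zero_le_one]
  have e1 : ∀ x : ℝ, (2 - 2*x) ^ ((n:ℝ)/2) = (fun u : ℝ => u ^ ((n:ℝ)/2)) ((-2) * x + 2) := by
    intro x; ring_nf
  simp_rw [e1]
  rw [intervalIntegral.integral_comp_mul_add (fun u : ℝ => u ^ ((n:ℝ)/2)) (by norm_num) 2]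
  norm_num
  rw [intervalIntegral.integral_symm]
  rw [integral_rpow (Or.inl (by linarith))]
  rw [Real.zero_rpow (by positivity)]
  rw [show (n:ℝ)/2 + 1 = ((n:ℝ)+2)/2 by ring]
  have : ((n:ℝ)+2)/2 ≠ 0 := by positivity
  field_simp
  ring

lemma blich_lintegral (n : ℕ) (hn : 1 ≤ n) :
    ∫⁻ x : EuclideanSpace ℝ (Fin n), ENNReal.ofReal (1 - ‖x‖ ^ 2 / 2)
      = volume (ball (0 : EuclideanSpace ℝ (Fin n)) 1)
        * ENNReal.ofReal (2 ^ (((n:ℝ)+2)/2) / ((n:ℝ)+2)) := by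
  set E := EuclideanSpace ℝ (Fin n)
  haveI : Nontrivial E := by
    apply Module.nontrivial_of_finrank_pos (R := ℝ)
    rw [finrank_euclideanSpace_fin]
    omega
  set V1 := volume (ball (0 : E) 1) with hV1
  have hmax : ∀ x : E, ENNReal.ofReal (1 - ‖x‖ ^ 2 / 2)
      = ENNReal.ofReal (max 0 (1 - ‖x‖ ^ 2 / 2)) := by
    intro x
    rcases le_total (1 - ‖x‖ ^ 2 / 2) 0 with h0 | h0
    · rw [ENNReal.ofReal_of_nonpos h0, max_eq_left h0, ENNReal.ofReal_zero]
    · rw [max_eq_right h0]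
  simp_rw [hmax]
  rw [lintegral_eq_lintegral_meas_lt volume (f := fun x : E => max 0 (1 - ‖x‖ ^ 2 / 2))
    (ae_of_all _ fun x => le_max_left _ _)
    ((continuous_const.max (by fun_prop)).aemeasurable)]
  have hset : ∀ t ∈ Ioi (0:ℝ), {a : E | t < max 0 (1 - ‖a‖ ^ 2 / 2)}
      = ball (0 : E) (Real.sqrt (2 - 2*t)) := by
    intro t ht
    ext a
    simp only [Set.mem_setOf_eq, mem_ball_zero_iff, lt_max_iff]
    rw [Set.mem_Ioi] at ht
    rw [Real.lt_sqrt (norm_nonneg a)]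
    constructor
    · rintro (h | h)
      · linarith
      · linarith
    · intro h
      right
      linarith
  calc ∫⁻ t in Ioi (0:ℝ), volume {a : E | t < max 0 (1 - ‖a‖ ^ 2 / 2)}
      = ∫⁻ t in Ioi (0:ℝ), ENNReal.ofReal (Real.sqrt (2 - 2*t) ^ n) * V1 := by
        refine setLIntegral_congr_fun measurableSet_Ioi (fun t ht => ?_)
        rw [hset t ht, Measure.addHaar_ball volume 0 (Real.sqrt_nonneg _)]
        congr 2
        rw [finrank_euclideanSpace_fin]
    _ = (∫⁻ t in Ioi (0:ℝ), ENNReal.ofReal (Real.sqrt (2 - 2*t) ^ n)) * V1 := by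
        rw [lintegral_mul_const' V1 _ measure_ball_lt_top.ne]
    _ = ENNReal.ofReal (2 ^ (((n:ℝ)+2)/2) / ((n:ℝ)+2)) * V1 := by
        congr 1
        have hsplit : Set.Ioi (0:ℝ) = Set.Ioo 0 1 ∪ Set.Ici 1 := (Set.Ioo_union_Ici_eq_Ioi zero_lt_one).symm
        have hdisj : Disjoint (Set.Ioo (0:ℝ) 1) (Set.Ici (1:ℝ)) :=
          Set.disjoint_left.mpr fun t ht ht' => absurd ht.2 (not_lt.mpr ht')
        rw [hsplit, lintegral_union measurableSet_Ici hdisj]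
        have h2 : ∫⁻ t in Ici (1:ℝ), ENNReal.ofReal (Real.sqrt (2 - 2*t) ^ n) = 0 := by
          rw [setLIntegral_congr_fun measurableSet_Ici
            (fun t (ht : 1 ≤ t) => ?_), lintegral_zero]
          rw [Real.sqrt_eq_zero'.mpr (by linarith), zero_pow (by omega : n ≠ 0),
            ENNReal.ofReal_zero]
        rw [h2, add_zero]
        have h1 : ∫⁻ t in Ioo (0:ℝ) 1, ENNReal.ofReal (Real.sqrt (2 - 2*t) ^ n)
            = ∫⁻ t in Ioo (0:ℝ) 1, ENNReal.ofReal ((2 - 2*t) ^ ((n:ℝ)/2)) := by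
          refine setLIntegral_congr_fun measurableSet_Ioo (fun t ht => ?_)
          congr 1
          rw [Real.sqrt_eq_rpow, ← Real.rpow_natCast ((2 - 2*t) ^ (1/2 : ℝ)) n,
            ← Real.rpow_mul (by linarith [ht.2] : (0:ℝ) ≤ 2 - 2*t)]
          congr 1
          ring
        rw [h1]
        have hint : IntegrableOn (fun t : ℝ => (2 - 2*t) ^ ((n:ℝ)/2)) (Ioo 0 1) :=
          ((cont_aux ((n:ℝ)/2) (by positivity)).integrableOn_Icc (a := 0) (b := 1)).mono_set
            Set.Ioo_subset_Icc_self
        have hnn : 0 ≤ᵐ[volume.restrict (Ioo (0:ℝ) 1)] fun t : ℝ => (2 - 2*t) ^ ((n:ℝ)/2) :=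
          (ae_restrict_iff' measurableSet_Ioo).mpr (ae_of_all _ fun t ht =>
            Real.rpow_nonneg (by linarith [ht.2]) _)
        rw [← ofReal_integral_eq_lintegral_ofReal hint hnn, real_J n hn]
    _ = V1 * ENNReal.ofReal (2 ^ (((n:ℝ)+2)/2) / ((n:ℝ)+2)) := mul_comm _ _

/-- Blichfeldt's sphere packing bound: any packing of `ℝ^n` by unit balls has upper
density at most `(n+2)/2^{(n+2)/2}`. -/
theorem blichfeldt_sphere_packing_bound (n : ℕ) (hn : 1 ≤ n)
    (c : ℕ → EuclideanSpace ℝ (Fin n))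
    (hsep : Pairwise fun i j => 2 ≤ dist (c i) (c j)) :
    limsup (fun r : ℝ =>
        (volume ((⋃ i, Metric.closedBall (c i) 1) ∩
            Metric.ball (0 : EuclideanSpace ℝ (Fin n)) r)).toReal /
          (volume (Metric.ball (0 : EuclideanSpace ℝ (Fin n)) r)).toReal) atTop ≤
      ((n : ℝ) + 2) / 2 ^ (((n : ℝ) + 2) / 2) := by
  let E := EuclideanSpace ℝ (Fin n)
  haveI : Nontrivial E := by
    apply Module.nontrivial_of_finrank_pos (R := ℝ)
    rw [finrank_euclideanSpace_fin]
    omega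
  set J : ℝ := 2 ^ (((n:ℝ)+2)/2) / ((n:ℝ)+2) with hJ
  have hJpos : 0 < J := by
    apply div_pos (Real.rpow_pos_of_pos two_pos _)
    positivity
  set C : ℝ := ((n : ℝ) + 2) / 2 ^ (((n : ℝ) + 2) / 2) with hC
  have hCJ : C = 1 / J := by rw [hC, hJ, one_div_div]
  set G : E → ENNReal := fun y => ENNReal.ofReal (1 - ‖y‖ ^ 2 / 2) with hG
  have hGmeas : Measurable G := by
    apply ENNReal.measurable_ofReal.comp
    fun_prop
  set V1 : ENNReal := volume (ball (0 : E) 1) with hV1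
  have hV1pos : V1 ≠ 0 := (measure_ball_pos volume 0 one_pos).ne'
  have hV1top : V1 ≠ ⊤ := measure_ball_lt_top.ne
  set a : ℝ := 1 + Real.sqrt 2 with ha
  set A : ℝ → Set E := fun r => (⋃ i, closedBall (c i) 1) ∩ ball (0 : E) r with hA
  -- Key inequality
  have key : ∀ r : ℝ, volume (A r) * ENNReal.ofReal J ≤ volume (ball (0 : E) (r + a)) := by
    intro r
    have step2 : ∀ i, volume (closedBall (c i) 1 ∩ ball (0 : E) r)
        * (V1 * ENNReal.ofReal J)
        ≤ V1 * ∫⁻ x in ball (0 : E) (r + a), G (x - c i) := by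
      intro i
      by_cases hne : (closedBall (c i) 1 ∩ ball (0 : E) r).Nonempty
      · obtain ⟨x, hx1, hx2⟩ := hne
        have hci : ‖c i‖ < r + 1 := by
          have h1 : dist x (c i) ≤ 1 := mem_closedBall.mp hx1
          have h2 : ‖x‖ < r := mem_ball_zero_iff.mp hx2
          have h3 : ‖c i - x‖ ≤ 1 := by
            rw [← dist_eq_norm, dist_comm]
            exact h1
          have h4 := norm_sub_norm_le (c i) x
          linarith
        have hsupp : Function.support (fun x => G (x - c i)) ⊆ ball (0 : E) (r + a) := by
          intro x hx
          rw [Function.mem_support, hG] at hx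
          have h1 : 0 < 1 - ‖x - c i‖ ^ 2 / 2 := by
            by_contra h
            push_neg at h
            exact hx (ENNReal.ofReal_of_nonpos h ▸ rfl)
          have h2 : ‖x - c i‖ < Real.sqrt 2 := by
            rw [Real.lt_sqrt (norm_nonneg _)]
            linarith
          rw [mem_ball_zero_iff]
          calc ‖x‖ ≤ ‖x - c i‖ + ‖c i‖ := by
                have := norm_add_le (x - c i) (c i)
                simpa using this
            _ < Real.sqrt 2 + (r + 1) := by linarith
            _ = r + a := by rw [ha]; ring
        have heq : ∫⁻ x in ball (0 : E) (r + a), G (x - c i)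
            = V1 * ENNReal.ofReal J := by
          rw [setLIntegral_eq_of_support_subset hsupp]
          rw [lintegral_sub_right_eq_self G (c i)]
          exact blich_lintegral n hn
        rw [heq]
        refine mul_le_mul_left ?_ _
        calc volume (closedBall (c i) 1 ∩ ball (0 : E) r)
            ≤ volume (closedBall (c i) 1) := measure_mono Set.inter_subset_left
          _ = V1 := by
              rw [Measure.addHaar_closedBall_eq_addHaar_ball]
              rw [Measure.addHaar_ball volume (c i) zero_le_one]
              simp
              rfl
      · rw [Set.not_nonempty_iff_eq_empty] at hne
        rw [hne, measure_empty, zero_mul]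
        exact zero_le
    have chain : volume (A r) * (V1 * ENNReal.ofReal J)
        ≤ V1 * volume (ball (0 : E) (r + a)) := by
      calc volume (A r) * (V1 * ENNReal.ofReal J)
          ≤ (∑' i, volume (closedBall (c i) 1 ∩ ball (0 : E) r))
            * (V1 * ENNReal.ofReal J) := by
            refine mul_le_mul_left ?_ _
            show volume ((⋃ i, closedBall (c i) 1) ∩ ball (0 : E) r) ≤ _
            rw [Set.iUnion_inter]
            exact measure_iUnion_le _
        _ = ∑' i, volume (closedBall (c i) 1 ∩ ball (0 : E) r)
            * (V1 * ENNReal.ofReal J) := ENNReal.tsum_mul_right.symm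
        _ ≤ ∑' i, V1 * ∫⁻ x in ball (0 : E) (r + a), G (x - c i) :=
            ENNReal.tsum_le_tsum step2
        _ = V1 * ∑' i, ∫⁻ x in ball (0 : E) (r + a), G (x - c i) :=
            ENNReal.tsum_mul_left
        _ = V1 * ∫⁻ x in ball (0 : E) (r + a), ∑' i, G (x - c i) := by
            have hGm2 : ∀ i, Measurable fun x : E => G (x - c i) := fun i =>
              hGmeas.comp (by fun_prop)
            rw [lintegral_tsum fun i => (hGm2 i).aemeasurable]
        _ ≤ V1 * ∫⁻ _x in ball (0 : E) (r + a), (1 : ENNReal) := by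
            refine mul_le_mul_right (lintegral_mono fun x => ?_) _
            exact blich_tsum c hsep x
        _ = V1 * volume (ball (0 : E) (r + a)) := by rw [setLIntegral_one]
    refine (ENNReal.mul_le_mul_iff_right hV1pos hV1top).mp ?_
    calc V1 * (volume (A r) * ENNReal.ofReal J)
        = volume (A r) * (V1 * ENNReal.ofReal J) := by ring
      _ ≤ V1 * volume (ball (0 : E) (r + a)) := chain
  -- pass to real numbers
  set V : ℝ := V1.toReal with hV
  have hVpos : 0 < V := ENNReal.toReal_pos hV1pos hV1top
  have ha0 : 0 < a := by rw [ha]; positivity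
  have hvol : ∀ s : ℝ, 0 ≤ s → (volume (ball (0:E) s)).toReal = s ^ n * V := by
    intro s hs
    rw [Measure.addHaar_ball volume _ hs, ENNReal.toReal_mul,
      ENNReal.toReal_ofReal (by positivity), finrank_euclideanSpace_fin]
  have hbound : ∀ r : ℝ, 1 ≤ r →
      (volume (A r)).toReal / (volume (ball (0:E) r)).toReal ≤ C * ((r + a)/r) ^ n := by
    intro r hr
    have hr0 : (0:ℝ) < r := lt_of_lt_of_le one_pos hr
    have h1 : (volume (A r)).toReal * J ≤ (r + a) ^ n * V := by
      have h2 := key r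
      have h3 : volume (ball (0:E) (r+a)) ≠ ⊤ := measure_ball_lt_top.ne
      have h4 := ENNReal.toReal_mono h3 h2
      rw [ENNReal.toReal_mul, ENNReal.toReal_ofReal hJpos.le] at h4
      rwa [hvol (r+a) (by linarith)] at h4
    have hAle : (volume (A r)).toReal ≤ (r+a)^n * V / J := by
      rw [le_div_iff₀ hJpos]; exact h1
    rw [hvol r hr0.le]
    calc (volume (A r)).toReal / (r ^ n * V)
        ≤ ((r+a)^n * V / J) / (r^n * V) :=
          (div_le_div_iff_of_pos_right (by positivity)).mpr hAle
      _ = C * ((r+a)/r)^n := by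
          rw [hCJ, div_pow]
          field_simp
  have hcob : IsCoboundedUnder (· ≤ ·) atTop
      (fun r : ℝ => (volume (A r)).toReal / (volume (ball (0:E) r)).toReal) :=
    isCoboundedUnder_le_of_le atTop fun r =>
      div_nonneg ENNReal.toReal_nonneg ENNReal.toReal_nonneg
  have htend : Tendsto (fun r : ℝ => C * ((r + a)/r) ^ n) atTop (nhds C) := by
    have h0 : Tendsto (fun r : ℝ => (r + a)/r) atTop (nhds 1) := by
      have he : (fun r : ℝ => (1:ℝ) + a * r⁻¹) =ᶠ[atTop] fun r : ℝ => (r + a)/r := by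
        filter_upwards [eventually_ne_atTop (0:ℝ)] with r hr
        field_simp
      have h2 : Tendsto (fun r : ℝ => (1:ℝ) + a * r⁻¹) atTop (nhds (1 + a * 0)) :=
        tendsto_const_nhds.add (tendsto_const_nhds.mul tendsto_inv_atTop_zero)
      have h3 := h2.congr' he
      simpa using h3
    have h1 : Tendsto (fun r : ℝ => ((r + a)/r) ^ n) atTop (nhds 1) := by
      have := h0.pow n
      simpa using this
    have := h1.const_mul C
    simpa using this
  calc limsup (fun r : ℝ =>
        (volume (A r)).toReal / (volume (ball (0:E) r)).toReal) atTop
      ≤ limsup (fun r : ℝ => C * ((r + a)/r) ^ n) atTop :=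
        limsup_le_limsup ((eventually_ge_atTop (1:ℝ)).mono fun r hr => hbound r hr)
          hcob htend.isBoundedUnder_le
    _ = C := htend.limsup_eq
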